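/- If g ∈ G(Γ) and s ∈ V_inf is such that g does not end with s⁻¹ (i.e., no reduced word for g has last letter a negative power of s), then ℓ(gs) = ℓ(g) + 1, where ℓ is the word length with respect to the generating set consisting of all elements of the finite vertex groups together with s^{±1} for s ∈ V_inf. -/

import Mathlib

open Pointwise

/-- Relations of the graph product of cyclic groups: `s ^ n = 1` whenever the label of
`s` is the finite value `n`, and commutators of generators joined by an edge. -/
def graphProductRels {V : Type*} (Γ : SimpleGraph V) (c : V → ℕ∞) : Set (FreeGroup V) :=
  {r | (∃ (s : V) (n : ℕ), c s = (n : ℕ∞) ∧ r = FreeGroup.of s ^ n) ∨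
       (∃ s t : V, Γ.Adj s t ∧
         r = FreeGroup.of s * FreeGroup.of t * (FreeGroup.of s)⁻¹ * (FreeGroup.of t)⁻¹)}

/-- The graph product of cyclic groups associated to a graph `Γ` with labeling `c`. -/
abbrev GraphProduct {V : Type*} (Γ : SimpleGraph V) (c : V → ℕ∞) : Type _ :=
  PresentedGroup (graphProductRels Γ c)

/-- The generator of `GraphProduct Γ c` corresponding to a vertex `s`. -/
def gpGen {V : Type*} (Γ : SimpleGraph V) (c : V → ℕ∞) (s : V) : GraphProduct Γ c :=
  PresentedGroup.of s

/-- The element of the graph product represented by a word `(s₁^{e₁}, …, s_k^{e_k})`. -/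
def wordProd {V : Type*} (Γ : SimpleGraph V) (c : V → ℕ∞) (w : List (V × ℤ)) :
    GraphProduct Γ c :=
  (w.map (fun p => gpGen Γ c p.1 ^ p.2)).prod

/-- The elementary moves on words: deleting a letter that is trivial in the vertex group,
merging consecutive powers of the same generator, and swapping consecutive letters whose
generators are joined by an edge. -/
inductive GPMove {V : Type*} (Γ : SimpleGraph V) (c : V → ℕ∞) :
    List (V × ℤ) → List (V × ℤ) → Prop
  | del (w₁ w₂ : List (V × ℤ)) (s : V) (e : ℤ) (h : gpGen Γ c s ^ e = 1) :
      GPMove Γ c (w₁ ++ (s, e) :: w₂) (w₁ ++ w₂)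
  | merge (w₁ w₂ : List (V × ℤ)) (s : V) (a b : ℤ) :
      GPMove Γ c (w₁ ++ (s, a) :: (s, b) :: w₂) (w₁ ++ (s, a + b) :: w₂)
  | swap (w₁ w₂ : List (V × ℤ)) (s t : V) (a b : ℤ) (h : Γ.Adj s t) :
      GPMove Γ c (w₁ ++ (s, a) :: (t, b) :: w₂) (w₁ ++ (t, b) :: (s, a) :: w₂)

/-- A word is reduced if it cannot be shortened by any sequence of elementary moves. -/
def GPReduced {V : Type*} (Γ : SimpleGraph V) (c : V → ℕ∞) (w : List (V × ℤ)) : Prop :=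
  ∀ w', Relation.ReflTransGen (GPMove Γ c) w w' → w.length ≤ w'.length

/-- The length of a word: infinite-order letters count with the absolute value of their
exponent, finite-order letters count once. -/
def wordLen {V : Type*} (c : V → ℕ∞) (w : List (V × ℤ)) : ℕ :=
  (w.map (fun p => if c p.1 = ⊤ then p.2.natAbs else 1)).sum

/-- The length of a group element: the minimum of the lengths of words representing it. -/
noncomputable def elLen {V : Type*} (Γ : SimpleGraph V) (c : V → ℕ∞)
    (g : GraphProduct Γ c) : ℕ :=
  sInf {n | ∃ w, wordProd Γ c w = g ∧ wordLen c w = n}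

/-- `g` ends with the generator `s`. -/
def EndsWith {V : Type*} (Γ : SimpleGraph V) (c : V → ℕ∞) (g : GraphProduct Γ c)
    (s : V) : Prop :=
  ∃ (w : List (V × ℤ)) (e : ℤ), GPReduced Γ c (w ++ [(s, e)]) ∧
    wordProd Γ c (w ++ [(s, e)]) = g

/-- `g` ends with a negative power of `s`: some reduced word representing `g` has
last letter `s^e` with `e < 0`. -/
def EndsWithNeg {V : Type*} (Γ : SimpleGraph V) (c : V → ℕ∞)
    (g : GraphProduct Γ c) (s : V) : Prop :=
  ∃ (w : List (V × ℤ)) (e : ℤ), e < 0 ∧ GPReduced Γ c (w ++ [(s, e)]) ∧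
    wordProd Γ c (w ++ [(s, e)]) = g

section Aux
variable {V : Type*} (Γ : SimpleGraph V) (c : V → ℕ∞)

theorem wordProd_nil : wordProd Γ c [] = 1 := rfl

theorem wordProd_cons (p : V × ℤ) (w : List (V × ℤ)) :
    wordProd Γ c (p :: w) = gpGen Γ c p.1 ^ p.2 * wordProd Γ c w := by
  simp [wordProd]

theorem wordProd_append (w₁ w₂ : List (V × ℤ)) :
    wordProd Γ c (w₁ ++ w₂) = wordProd Γ c w₁ * wordProd Γ c w₂ := by
  simp [wordProd]

theorem gpGen_comm {s t : V} (h : Γ.Adj s t) :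
    Commute (gpGen Γ c s) (gpGen Γ c t) := by
  have h1 : (PresentedGroup.mk (graphProductRels Γ c))
      (FreeGroup.of s * FreeGroup.of t * (FreeGroup.of s)⁻¹ * (FreeGroup.of t)⁻¹) = 1 := by
    apply (QuotientGroup.eq_one_iff _).mpr
    exact Subgroup.subset_normalClosure (Or.inr ⟨s, t, h, rfl⟩)
  have h2 : gpGen Γ c s * gpGen Γ c t * (gpGen Γ c s)⁻¹ * (gpGen Γ c t)⁻¹ = 1 := by
    simpa [gpGen, PresentedGroup.of] using h1
  exact (commutatorElement_eq_one_iff_commute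
    (g₁ := gpGen Γ c s) (g₂ := gpGen Γ c t)).mp (by rw [commutatorElement_def]; group; group at h2; exact h2)

theorem wordLen_append (w₁ w₂ : List (V × ℤ)) :
    wordLen c (w₁ ++ w₂) = wordLen c w₁ + wordLen c w₂ := by
  simp [wordLen]

theorem wordLen_cons (p : V × ℤ) (w : List (V × ℤ)) :
    wordLen c (p :: w) = (if c p.1 = ⊤ then p.2.natAbs else 1) + wordLen c w := by
  simp [wordLen]

theorem GPMove.wordProd_eq {w w' : List (V × ℤ)} (m : GPMove Γ c w w') :
    wordProd Γ c w' = wordProd Γ c w := by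
  induction m with
  | del w₁ w₂ s e h => simp [wordProd_append, wordProd_cons, h]
  | merge w₁ w₂ s a b => simp [wordProd_append, wordProd_cons, zpow_add, mul_assoc]
  | swap w₁ w₂ s t a b h =>
    have := ((gpGen_comm Γ c h).zpow_zpow a b).eq
    simp [wordProd_append, wordProd_cons, ← mul_assoc, this]

theorem GPMove.wordLen_le {w w' : List (V × ℤ)} (m : GPMove Γ c w w') :
    wordLen c w' ≤ wordLen c w := by
  induction m with
  | del w₁ w₂ s e h => simp [wordLen_append, wordLen_cons]
  | merge w₁ w₂ s a b =>
    simp only [wordLen_append, wordLen_cons]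
    have : (a+b).natAbs ≤ a.natAbs + b.natAbs := by omega
    split <;> omega
  | swap w₁ w₂ s t a b h => simp [wordLen_append, wordLen_cons]; omega

theorem rtg_wordProd_eq {w w' : List (V × ℤ)}
    (m : Relation.ReflTransGen (GPMove Γ c) w w') : wordProd Γ c w' = wordProd Γ c w := by
  induction m with
  | refl => rfl
  | tail _ h ih => rw [h.wordProd_eq, ih]

theorem rtg_wordLen_le {w w' : List (V × ℤ)}
    (m : Relation.ReflTransGen (GPMove Γ c) w w') : wordLen c w' ≤ wordLen c w := by
  induction m with
  | refl => exact le_refl _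
  | tail _ h ih => exact le_trans h.wordLen_le ih

end Aux

section Aux2
variable {V : Type*} (Γ : SimpleGraph V) (c : V → ℕ∞)

theorem cons_append_split {α : Type*} : ∀ {l₁ : List α} {l₃ : List α} {l₂ l₄ : List α} {a b : α},
    l₁ ++ a :: l₂ = l₃ ++ b :: l₄ →
    (∃ m, l₃ = l₁ ++ a :: m ∧ l₂ = m ++ b :: l₄) ∨ (l₁ = l₃ ∧ a = b ∧ l₂ = l₄) ∨
    (∃ m, l₁ = l₃ ++ b :: m ∧ l₄ = m ++ a :: l₂)
  | [], [], l₂, l₄, a, b, h => by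
    simp at h; exact Or.inr (Or.inl ⟨rfl, h.1, h.2⟩)
  | [], q::l₃, l₂, l₄, a, b, h => by
    simp at h; exact Or.inl ⟨l₃, by simp [h.1], h.2⟩
  | q::l₁, [], l₂, l₄, a, b, h => by
    simp at h; exact Or.inr (Or.inr ⟨l₁, by simp [h.1], h.2.symm⟩)
  | q::l₁, q'::l₃, l₂, l₄, a, b, h => by
    simp at h
    rcases cons_append_split h.2 with ⟨m, h1, h2⟩ | ⟨h1, h2, h3⟩ | ⟨m, h1, h2⟩
    · exact Or.inl ⟨m, by simp [h.1, h1], h2⟩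
    · exact Or.inr (Or.inl ⟨by simp [h.1, h1], h2, h3⟩)
    · exact Or.inr (Or.inr ⟨m, by simp [h.1, h1], h2⟩)

theorem gpGen_zpow_ne_one {s : V} (hs : c s = ⊤) {e : ℤ} (he : e ≠ 0) :
    gpGen Γ c s ^ e ≠ 1 := by
  classical
  set f : V → Multiplicative ℤ := fun t => if t = s then Multiplicative.ofAdd 1 else 1 with hf
  have hrels : ∀ r ∈ graphProductRels Γ c, FreeGroup.lift f r = 1 := by
    rintro r (⟨t, n, hcn, rfl⟩ | ⟨t, u, _, rfl⟩)
    · have ht : t ≠ s := by rintro rfl; rw [hs] at hcn; exact (by simp : (n : ℕ∞) ≠ (⊤ : ℕ∞)) hcn.symm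
      simp [hf, ht]
    · simp only [map_mul, map_inv, FreeGroup.lift_apply_of]
      group
      rw [mul_comm (f t) (f u)]
      group
  intro h1
  have := congrArg (PresentedGroup.toGroup hrels) h1
  rw [map_zpow, map_one] at this
  have h2 : PresentedGroup.toGroup hrels (gpGen Γ c s) = Multiplicative.ofAdd 1 := by
    simp [gpGen, PresentedGroup.toGroup.of, hf]
  rw [h2] at this
  have : e = 0 := by
    have := congrArg Multiplicative.toAdd this
    simpa using this
  exact he this

theorem exists_word (g : GraphProduct Γ c) : ∃ w, wordProd Γ c w = g := by
  induction g using PresentedGroup.induction_on with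
  | H z =>
    induction z using FreeGroup.induction_on with
    | C1 => exact ⟨[], by simp [wordProd_nil, map_one]⟩
    | of x => exact ⟨[(x, 1)], by simp [wordProd_cons, wordProd_nil]; rfl⟩
    | inv_of x _ => exact ⟨[(x, -1)], by simp [wordProd_cons, wordProd_nil, map_inv]; rfl⟩
    | mul x y hx hy =>
      obtain ⟨wx, hwx⟩ := hx
      obtain ⟨wy, hwy⟩ := hy
      exact ⟨wx ++ wy, by rw [wordProd_append, hwx, hwy, map_mul]⟩

theorem elLen_le {g : GraphProduct Γ c} {w : List (V × ℤ)} (hw : wordProd Γ c w = g) :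
    elLen Γ c g ≤ wordLen c w :=
  Nat.sInf_le ⟨w, hw, rfl⟩

theorem exists_min_word (g : GraphProduct Γ c) :
    ∃ w, wordProd Γ c w = g ∧ wordLen c w = elLen Γ c g := by
  obtain ⟨w, hw⟩ := exists_word Γ c g
  have : elLen Γ c g ∈ {n | ∃ w, wordProd Γ c w = g ∧ wordLen c w = n} :=
    Nat.sInf_mem ⟨wordLen c w, w, hw, rfl⟩
  exact this

theorem exists_reduced (w : List (V × ℤ)) :
    ∃ r, Relation.ReflTransGen (GPMove Γ c) w r ∧ GPReduced Γ c r := by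
  by_cases hw : GPReduced Γ c w
  · exact ⟨w, Relation.ReflTransGen.refl, hw⟩
  · simp only [GPReduced, not_forall] at hw
    obtain ⟨w', hr, hl⟩ := hw
    have hlt : w'.length < w.length := by omega
    obtain ⟨r, hr', hred⟩ := exists_reduced w'
    exact ⟨r, hr.trans hr', hred⟩
termination_by w.length

end Aux2

section Inv
variable {V : Type*} (Γ : SimpleGraph V) (c : V → ℕ∞)

/-- Invariant: the word has a distinguished negative `s`-letter, and every letter to its
right is adjacent to `s`. -/
def GPInv (s : V) (w : List (V × ℤ)) : Prop :=
  ∃ (A : List (V × ℤ)) (e : ℤ) (B : List (V × ℤ)),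
    w = A ++ (s, e) :: B ∧ e < 0 ∧ ∀ p ∈ B, Γ.Adj s p.1

theorem inv_step {s : V} (hs : c s = ⊤) {w w' : List (V × ℤ)} (m : GPMove Γ c w w')
    (hI : GPInv Γ s w) :
    GPInv Γ s w' ∨ wordLen c w' + 2 ≤ wordLen c w := by
  obtain ⟨A, e, B, hw, he, hB⟩ := hI
  cases m with
  | del w₁ w₂ t f h =>
    rcases cons_append_split hw with ⟨m, h1, h2⟩ | ⟨h1, h2, h3⟩ | ⟨m, h1, h2⟩
    · -- deleted letter lies in A
      exact Or.inl ⟨w₁ ++ m, e, B, by simp [h2], he, hB⟩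
    · -- deleted letter is the marked letter: impossible
      exfalso
      obtain ⟨rfl, rfl⟩ := Prod.mk.injEq .. ▸ h2
      exact gpGen_zpow_ne_one Γ c hs (by omega) h
    · -- deleted letter lies in B
      refine Or.inl ⟨A, e, m ++ w₂, by simp [h1], he, ?_⟩
      intro p hp
      apply hB
      rw [h2]
      rcases List.mem_append.mp hp with h' | h'
      · exact List.mem_append.mpr (Or.inl h')
      · exact List.mem_append.mpr (Or.inr (List.mem_cons_of_mem _ h'))
  | merge w₁ w₂ t a b =>
    rcases cons_append_split (l₂ := (t, b) :: w₂) hw with ⟨m, h1, h2⟩ | ⟨h1, h2, h3⟩ | ⟨m, h1, h2⟩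
    · -- (t,a) in A
      cases m with
      | nil =>
        -- (t,b) is the marked letter; merging (t,a) into it
        simp at h2
        obtain ⟨⟨rfl, rfl⟩, rfl⟩ := h2
        by_cases hae : a + b < 0
        · exact Or.inl ⟨w₁, a + b, w₂, by simp, hae, hB⟩
        · right
          simp [wordLen_append, wordLen_cons, hs]
          omega
      | cons q m' =>
        simp at h2
        obtain ⟨rfl, h2⟩ := h2
        exact Or.inl ⟨w₁ ++ (t, a + b) :: m', e, B, by simp [h2], he, hB⟩
    · -- (t,a) is the marked letter, (t,b) is the first letter of B: t adjacent to t, absurd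
      exfalso
      obtain ⟨rfl, rfl⟩ := Prod.mk.injEq .. ▸ h2
      exact Γ.irrefl (hB (t, b) (by rw [← h3]; exact List.mem_cons_self))
    · -- both letters in B
      refine Or.inl ⟨A, e, m ++ (t, a + b) :: w₂, by simp [h1], he, ?_⟩
      intro p hp
      rcases List.mem_append.mp hp with h' | h'
      · exact hB p (by rw [h2]; exact List.mem_append.mpr (Or.inl h'))
      · rcases List.mem_cons.mp h' with h'' | h''
        · subst h''
          exact hB (t, a) (by rw [h2]; exact List.mem_append.mpr (Or.inr (List.mem_cons_self)))
        · exact hB p (by rw [h2]; simp [h''])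
  | swap w₁ w₂ t u a b hadj =>
    rcases cons_append_split (l₂ := (u, b) :: w₂) hw with ⟨m, h1, h2⟩ | ⟨h1, h2, h3⟩ | ⟨m, h1, h2⟩
    · cases m with
      | nil =>
        -- (u,b) is the marked letter
        simp at h2
        obtain ⟨⟨rfl, rfl⟩, rfl⟩ := h2
        refine Or.inl ⟨w₁, b, (t, a) :: w₂, by simp, he, ?_⟩
        intro p hp
        rcases List.mem_cons.mp hp with h'' | h''
        · subst h''; exact hadj.symm
        · exact hB p h''
      | cons q m' =>
        simp at h2
        obtain ⟨rfl, h2⟩ := h2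
        exact Or.inl ⟨w₁ ++ (u, b) :: (t, a) :: m', e, B, by simp [h2], he, hB⟩
    · -- (t,a) is the marked letter
      injection h2 with h2a h2b
      subst h2a; subst h2b
      refine Or.inl ⟨A ++ [(u, b)], a, w₂, by simp [h1], he, ?_⟩
      intro p hp
      exact hB p (by rw [← h3]; exact List.mem_cons_of_mem _ hp)
    · -- both letters in B
      refine Or.inl ⟨A, e, m ++ (u, b) :: (t, a) :: w₂, by simp [h1], he, ?_⟩
      intro p hp
      have : p ∈ B := by
        rw [h2]
        rcases List.mem_append.mp hp with h' | h'
        · exact List.mem_append.mpr (Or.inl h')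
        · rcases List.mem_cons.mp h' with h'' | h''
          · exact h'' ▸ List.mem_append.mpr (Or.inr (by simp))
          · rcases List.mem_cons.mp h'' with h3 | h3
            · exact h3 ▸ List.mem_append.mpr (Or.inr (by simp))
            · exact List.mem_append.mpr (Or.inr (by simp [h3]))
      exact hB p this
end Inv

section Main
variable {V : Type*} (Γ : SimpleGraph V) (c : V → ℕ∞)

theorem inv_chain {s : V} (hs : c s = ⊤) {w r : List (V × ℤ)}
    (hrtg : Relation.ReflTransGen (GPMove Γ c) w r) :
    GPInv Γ s w → (GPInv Γ s r ∨ wordLen c r + 2 ≤ wordLen c w) := by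
  induction hrtg using Relation.ReflTransGen.head_induction_on with
  | refl => exact fun hI => Or.inl hI
  | head hstep htail ih =>
    intro hI
    rcases inv_step Γ c hs hstep hI with hI' | hlen
    · rcases ih hI' with h' | h'
      · exact Or.inl h'
      · exact Or.inr (le_trans (by omega) (GPMove.wordLen_le Γ c hstep))
    · have := rtg_wordLen_le Γ c htail
      exact Or.inr (by omega)

theorem rtg_shuffle_end {s : V} (e : ℤ) : ∀ (B A : List (V × ℤ)),
    (∀ p ∈ B, Γ.Adj s p.1) →
    Relation.ReflTransGen (GPMove Γ c) (A ++ (s, e) :: B) ((A ++ B) ++ [(s, e)])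
  | [], A, _ => by simpa using Relation.ReflTransGen.refl
  | q :: B, A, hB => by
    have step : GPMove Γ c (A ++ (s, e) :: q :: B) (A ++ q :: (s, e) :: B) :=
      GPMove.swap A B s q.1 e q.2 (hB q (List.mem_cons_self))
    have rest := rtg_shuffle_end e B (A ++ [q]) (fun p hp => hB p (List.mem_cons_of_mem _ hp))
    have rest' : Relation.ReflTransGen (GPMove Γ c) (A ++ q :: (s, e) :: B)
        ((A ++ q :: B) ++ [(s, e)]) := by
      simpa [List.append_assoc] using rest
    exact rest'.head step

theorem the_main {s : V} (hs : c s = ⊤) (g : GraphProduct Γ c)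
    (h : ¬ EndsWithNeg Γ c g s) :
    elLen Γ c (g * gpGen Γ c s) = elLen Γ c g + 1 := by
  classical
  obtain ⟨wg, hwg, hlg⟩ := exists_min_word Γ c g
  have hub : elLen Γ c (g * gpGen Γ c s) ≤ elLen Γ c g + 1 := by
    have hp : wordProd Γ c (wg ++ [(s, 1)]) = g * gpGen Γ c s := by
      rw [wordProd_append, hwg, wordProd_cons, wordProd_nil]
      simp
    have := elLen_le Γ c hp
    rw [wordLen_append] at this
    have h2 : wordLen c [(s, 1)] = 1 := by simp [wordLen]
    rw [h2, hlg] at this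
    exact this
  have hlb : elLen Γ c g + 1 ≤ elLen Γ c (g * gpGen Γ c s) := by
    by_contra hcon
    push_neg at hcon
    have hcon' : elLen Γ c (g * gpGen Γ c s) ≤ elLen Γ c g := by omega
    obtain ⟨u, hu, hul⟩ := exists_min_word Γ c (g * gpGen Γ c s)
    have hv : wordProd Γ c (u ++ [(s, -1)]) = g := by
      rw [wordProd_append, hu, wordProd_cons, wordProd_nil]
      simp [zpow_neg, mul_assoc]
    have hvlen : wordLen c (u ++ [(s, -1)]) = wordLen c u + 1 := by
      simp [wordLen_append, wordLen_cons, wordLen, hs]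
    obtain ⟨r, hrtg, hred⟩ := exists_reduced Γ c (u ++ [(s, -1)])
    have hinv : GPInv Γ s (u ++ [(s, -1)]) :=
      ⟨u, -1, [], by simp, by norm_num, by simp⟩
    rcases inv_chain Γ c hs hrtg hinv with hI | hlen
    · obtain ⟨A, e, B, hr, he, hB⟩ := hI
      have hrtg2 : Relation.ReflTransGen (GPMove Γ c) r ((A ++ B) ++ [(s, e)]) := by
        rw [hr]; exact rtg_shuffle_end Γ c e B A hB
      have hred' : GPReduced Γ c ((A ++ B) ++ [(s, e)]) := by
        intro w'' hw''
        calc ((A ++ B) ++ [(s, e)]).length = r.length := by simp [hr]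
        _ ≤ w''.length := hred w'' (hrtg2.trans hw'')
      have hprod : wordProd Γ c ((A ++ B) ++ [(s, e)]) = g := by
        rw [rtg_wordProd_eq Γ c hrtg2, rtg_wordProd_eq Γ c hrtg, hv]
      exact h ⟨A ++ B, e, he, hred', hprod⟩
    · have h1 : elLen Γ c g ≤ wordLen c r :=
        elLen_le Γ c (by rw [rtg_wordProd_eq Γ c hrtg, hv])
      omega
  omega

end Main


/-- if `s ∈ V_inf` and `g` does not end with a negative power of `s`,
then `ℓ(gs) = ℓ(g) + 1`. -/
theorem elLen_mul_gen_of_not_endsWithNeg {V : Type*} [Fintype V] [DecidableEq V]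
    (Γ : SimpleGraph V) (c : V → ℕ∞) (s : V) (hs : c s = ⊤)
    (g : GraphProduct Γ c) (h : ¬ EndsWithNeg Γ c g s) :
    elLen Γ c (g * gpGen Γ c s) = elLen Γ c g + 1 := by
  exact the_main Γ c (s := s) hs g h
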